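/- In a state-respecting bundle, each partition class P_{n₀} admits an enumeration n₀, n₁, …, n_ℓ of all its nodes such that (a) the subsequence of initiation/transition nodes is exactly their ⤳⁺-linear order, and (b) the enumeration order extends the relation ≺⁺ restricted to P_{n₀}. -/

import Mathlib

/-- Tree-like divergence lemma: two nodes reachable from `a` are either
comparable under `ReflTransGen`, or the paths diverge at some node `m`. -/
private lemma diverge_aux {V : Type*} (lead : V → V → Prop) :
    ∀ a x, Relation.ReflTransGen lead a x → ∀ y, Relation.ReflTransGen lead a y →
      Relation.ReflTransGen lead x y ∨ Relation.ReflTransGen lead y x ∨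
        ∃ m a' b', Relation.ReflTransGen lead a m ∧ lead m a' ∧ lead m b' ∧ a' ≠ b' ∧
          Relation.ReflTransGen lead a' x ∧ Relation.ReflTransGen lead b' y := by
  intro a x hax
  induction hax using Relation.ReflTransGen.head_induction_on with
  | refl => intro y hay; exact Or.inl hay
  | @head a c hac hcx ih =>
    intro y hay
    rcases hay.cases_head with rfl | ⟨y₁, hay₁, hy₁y⟩
    · exact Or.inr (Or.inl (hcx.head hac))
    · by_cases hcy : c = y₁
      · subst hcy
        rcases ih y hy₁y with h | h | ⟨m, a', b', hm, h₁, h₂, h₃, h₄, h₅⟩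
        · exact Or.inl h
        · exact Or.inr (Or.inl h)
        · exact Or.inr (Or.inr ⟨m, a', b', hm.head hac, h₁, h₂, h₃, h₄, h₅⟩)
      · exact Or.inr (Or.inr ⟨a, c, y₁, Relation.ReflTransGen.refl, hac, hay₁, hcy, hcx, hy₁y⟩)

/-- In a state-respecting bundle, each partition class `P n₀`
admits an enumeration `n₀, n₁, …, n_ℓ` of all its nodes such that (a) the
subsequence of initiation/transition nodes is exactly their `⤳⁺`-linear
order, and (b) the enumeration order extends `≺⁺` restricted to `P n₀`. -/
theorem stmt_8 {V : Type*} [Fintype V] (lead : V → V → Prop)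
    (I T O : Set V)
    (huniq : ∀ n ∈ T ∪ O, ∃! m, lead m n)
    (hinit : ∀ n ∈ I, ¬ ∃ m, lead m n)
    (hsrc : ∀ m n, lead m n → m ∈ I ∪ T)
    (htgt : ∀ m n, lead m n → n ∈ T ∪ O)
    (hNSS : ∀ n n₁ n₂, lead n n₁ → lead n n₂ → n₁ ∈ T → n₂ ∈ T → n₁ = n₂)
    -- `≺⁺`: the acyclic extension of the bundle order required by the
    -- Observation Ordering Principle
    (precP : V → V → Prop)
    (hPirr : Irreflexive precP) (hPtrans : Transitive precP)
    (hPlead : ∀ a b, lead a b → precP a b)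
    (hOOP : ∀ n no nt, lead n no → lead n nt → no ∈ O → nt ∈ T → precP no nt)
    (n₀ : V) (hn₀ : n₀ ∈ I) :
    ∃ l : List V, l.Nodup ∧
      (∀ x, x ∈ l ↔ Relation.ReflTransGen lead n₀ x) ∧
      l.head? = some n₀ ∧
      -- (a) earlier initiation/transition nodes `⤳⁺`-precede later ones
      l.Pairwise (fun x y => x ∈ I ∪ T → y ∈ I ∪ T → Relation.TransGen lead x y) ∧
      -- (b) the enumeration extends `≺⁺` on `P n₀`
      l.Pairwise (fun x y => ¬ precP y x) := by
  classical
  -- `TransGen lead ⊆ precP`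
  have htg : ∀ a b, Relation.TransGen lead a b → precP a b := by
    intro a b h
    induction h with
    | single h => exact hPlead _ _ h
    | tail _ h ih => exact hPtrans ih (hPlead _ _ h)
  -- comparability of I∪T nodes in P
  have hchain : ∀ x y, Relation.ReflTransGen lead n₀ x → Relation.ReflTransGen lead n₀ y →
      x ∈ I ∪ T → y ∈ I ∪ T →
      Relation.ReflTransGen lead x y ∨ Relation.ReflTransGen lead y x := by
    intro x y hx hy hxIT hyIT
    rcases diverge_aux lead n₀ x hx y hy with h | h | ⟨m, a', b', _, h₁, h₂, h₃, h₄, h₅⟩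
    · exact Or.inl h
    · exact Or.inr h
    · -- divergence is impossible: both a' and b' would be transition nodes
      exfalso
      have key : ∀ z c, lead m c → Relation.ReflTransGen lead c z → z ∈ I ∪ T → c ∈ T := by
        intro z c hmc hcz hzIT
        rcases hcz.cases_head with rfl | ⟨w, hcw, _⟩
        · rcases hzIT with hz | hz
          · exact absurd ⟨m, hmc⟩ (hinit _ hz)
          · exact hz
        · rcases hsrc _ _ hcw with hc | hc
          · exact absurd ⟨m, hmc⟩ (hinit _ hc)
          · exact hc
      exact h₃ (hNSS m a' b' h₁ h₂ (key x a' h₁ h₄ hxIT) (key y b' h₂ h₅ hyIT))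
  -- build a linear extension of `precP`
  have hpo : IsPartialOrder V (fun a b => precP a b ∨ a = b) :=
    { refl := fun a => Or.inr rfl
      trans := by
        rintro a b c (h₁ | rfl) (h₂ | rfl)
        · exact Or.inl (hPtrans h₁ h₂)
        · exact Or.inl h₁
        · exact Or.inl h₂
        · exact Or.inr rfl
      antisymm := by
        rintro a b (h₁ | rfl) h₂
        · rcases h₂ with h₂ | rfl
          · exact absurd (hPtrans h₁ h₂) (hPirr a)
          · rfl
        · rfl }
  obtain ⟨r, hlin, hext⟩ := @extend_partialOrder V (fun a b => precP a b ∨ a = b) hpo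
  haveI : IsLinearOrder V r := hlin
  haveI : DecidableRel r := Classical.decRel r
  have hrP : ∀ a b, precP a b → r a b := fun a b h => hext a b (Or.inl h)
  -- the set P n₀ and its sorted enumeration
  set s : Finset V := Finset.univ.filter (fun x => Relation.ReflTransGen lead n₀ x) with hs
  have hmem : ∀ x, x ∈ s ↔ Relation.ReflTransGen lead n₀ x := by
    intro x; simp [hs]
  refine ⟨s.sort r, s.sort_nodup r, fun x => by rw [Finset.mem_sort, hmem], ?_, ?_, ?_⟩
  · -- head is n₀
    have hn₀s : n₀ ∈ s.sort r := by rw [Finset.mem_sort, hmem]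
    have hsorted := s.pairwise_sort r
    cases hl : s.sort r with
    | nil => rw [hl] at hn₀s; simp at hn₀s
    | cons a t =>
      rw [hl] at hn₀s hsorted
      rcases List.mem_cons.mp hn₀s with rfl | hn₀t
      · rfl
      · -- a ∈ s, so reachable from n₀; if a ≠ n₀ then precP n₀ a, so r n₀ a
        have ha : Relation.ReflTransGen lead n₀ a := by
          rw [← hmem, ← Finset.mem_sort (r := r), hl]; exact List.mem_cons_self (a := a) (l := t)
        have han : r a n₀ := (List.pairwise_cons.mp hsorted).1 n₀ hn₀t
        rcases Relation.reflTransGen_iff_eq_or_transGen.mp ha with rfl | ha'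
        · rfl
        · have : a = n₀ := antisymm han (hrP _ _ (htg _ _ ha'))
          simp [this]
  · -- (a)
    have hpair : (s.sort r).Pairwise (fun x y => r x y ∧ x ≠ y) :=
      (s.pairwise_sort r).and (s.sort_nodup r)
    refine hpair.imp_of_mem ?_
    intro x y hxl hyl ⟨hrxy, hne⟩ hxIT hyIT
    have hxP : Relation.ReflTransGen lead n₀ x := by rwa [Finset.mem_sort, hmem] at hxl
    have hyP : Relation.ReflTransGen lead n₀ y := by rwa [Finset.mem_sort, hmem] at hyl
    rcases hchain x y hxP hyP hxIT hyIT with h | h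
    · rcases Relation.reflTransGen_iff_eq_or_transGen.mp h with rfl | h'
      · exact absurd rfl hne
      · exact h'
    · rcases Relation.reflTransGen_iff_eq_or_transGen.mp h with rfl | h'
      · exact absurd rfl hne
      · exact absurd (antisymm hrxy (hrP _ _ (htg _ _ h'))) hne
  · -- (b)
    have hpair : (s.sort r).Pairwise (fun x y => r x y ∧ x ≠ y) :=
      (s.pairwise_sort r).and (s.sort_nodup r)
    refine hpair.imp ?_
    rintro x y ⟨hrxy, hne⟩ hpyx
    exact hne (antisymm hrxy (hrP _ _ hpyx))
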